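/- For every t ≥ 1, the infimum over all timed models (p_s)_{s≥1} of the dynamic knowledge base K = ((μ, T), 𝕊) of P_{p_t}(c) equals the infimum over all models p of the static knowledge base (μ_t, 𝕊) of P_p(c). -/

import Mathlib

open scoped ENNReal

namespace BL

variable {I A C V : Type*}

/-- A world `W` satisfies the context `κ` if it agrees with `κ` wherever it is defined. -/
def SatCtx (W : V → Bool) (κ : V → Option Bool) : Prop :=
  ∀ v b, κ v = some b → W v = b

/-- The ontology induced by the world `W` from the `V`-ontology `𝕊`. -/
def OW (𝕊 : Finset (A × (V → Option Bool))) (W : V → Bool) : Set A :=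
  {α | ∃ κ, (α, κ) ∈ 𝕊 ∧ SatCtx W κ}

/-- `i` is a model of the ontology `O`. -/
def IsOntModel (satA : I → A → Prop) (O : Set A) (i : I) : Prop :=
  ∀ α ∈ O, satA i α

/-- The ontology `O` entails the consequence `c`. -/
def Entails (satA : I → A → Prop) (satC : I → C → Prop) (O : Set A) (c : C) : Prop :=
  ∀ i : I, IsOntModel satA O i → satC i c

/-- A probabilistic interpretation `p` (a finitely supported PMF on pairs of an
interpretation and a world) is a model of the knowledge base `(PB, 𝕊)`. -/
def IsKBModel (satA : I → A → Prop) (PB : PMF (V → Bool))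
    (𝕊 : Finset (A × (V → Option Bool))) (p : PMF (I × (V → Bool))) : Prop :=
  p.support.Finite ∧
    (∀ iW ∈ p.support, IsOntModel satA (OW 𝕊 iW.2) iW.1) ∧
    ∀ W : V → Bool, ∑' i : I, p (i, W) = PB W

/-- `P_p(c)`: the probability of the consequence `c` w.r.t. `p`. -/
noncomputable def Pp (satC : I → C → Prop) (p : PMF (I × (V → Bool))) (c : C) : ℝ≥0∞ :=
  ∑' iW : I × (V → Bool), {x : I × (V → Bool) | satC x.1 c}.indicator (⇑p) iW

/-- `P_K(c)`: the infimum of `P_p(c)` over all models `p` of the knowledge base. -/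
noncomputable def PK (satA : I → A → Prop) (satC : I → C → Prop) (PB : PMF (V → Bool))
    (𝕊 : Finset (A × (V → Option Bool))) (c : C) : ℝ≥0∞ :=
  sInf {x : ℝ≥0∞ | ∃ p : PMF (I × (V → Bool)), IsKBModel satA PB 𝕊 p ∧ x = Pp satC p c}

/-- The `t`-th marginal of the DBN `(μ, T)` (0-indexed: `marg μ T 0 = μ_1 = μ`,
and `marg μ T n = μ_{n+1}` with `μ_{t+1}(W') = Σ_W μ_t(W)·T(W)(W')`). -/
noncomputable def marg (μ : PMF (V → Bool)) (T : (V → Bool) → PMF (V → Bool)) :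
    ℕ → PMF (V → Bool)
  | 0 => μ
  | n + 1 => (marg μ T n).bind T

/-- A timed probabilistic interpretation `(p_t)_{t ≥ 1}` is a model of the dynamic
knowledge base `((μ, T), 𝕊)` if for every `t ≥ 1`, `p t` is a model of `(μ_t, 𝕊)`. -/
def IsTimedModel (satA : I → A → Prop) (μ : PMF (V → Bool))
    (T : (V → Bool) → PMF (V → Bool)) (𝕊 : Finset (A × (V → Option Bool)))
    (p : ℕ → PMF (I × (V → Bool))) : Prop :=
  ∀ t : ℕ, 1 ≤ t → IsKBModel satA (marg μ T (t - 1)) 𝕊 (p t)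

/-- `P_K(c[t])`: the infimum of `P_{p_t}(c)` over all timed models of the dynamic KB. -/
noncomputable def PKtime (satA : I → A → Prop) (satC : I → C → Prop)
    (μ : PMF (V → Bool)) (T : (V → Bool) → PMF (V → Bool))
    (𝕊 : Finset (A × (V → Option Bool))) (c : C) (t : ℕ) : ℝ≥0∞ :=
  sInf {x : ℝ≥0∞ | ∃ p : ℕ → PMF (I × (V → Bool)),
    IsTimedModel satA μ T 𝕊 p ∧ x = Pp satC (p t) c}

lemma exists_kbmodel [Fintype V] (satA : I → A → Prop)
    (𝕊 : Finset (A × (V → Option Bool)))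
    (hmod : ∀ W : V → Bool, ∃ i : I, IsOntModel satA (OW 𝕊 W) i)
    (PB : PMF (V → Bool)) : ∃ p, IsKBModel satA PB 𝕊 p := by
  classical
  choose f hf using hmod
  set g : (V → Bool) → I × (V → Bool) := fun W => (f W, W) with hg
  have hp : ∀ (i : I) (W : V → Bool),
      (PB.map g) (i, W) = if i = f W then PB W else 0 := by
    intro i W
    rw [PMF.map_apply]
    rw [tsum_eq_single W]
    · by_cases h : i = f W
      · simp [hg, h]
      · simp [hg, Prod.ext_iff, h]
    · intro W' hW'
      simp [hg, Prod.ext_iff, Ne.symm hW']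
  refine ⟨PB.map g, ?_, ?_, ?_⟩
  · exact Set.Finite.subset (Set.finite_range g)
      (by rw [PMF.support_map]; exact Set.image_subset_range _ _)
  · intro iW hiW
    rw [PMF.support_map] at hiW
    obtain ⟨W, -, rfl⟩ := hiW
    exact hf W
  · intro W
    simp only [hp]
    exact tsum_ite_eq (f W) (fun _ => PB W)

/-- for every `t ≥ 1`, the infimum over timed models of the dynamic KB of
`P_{p_t}(c)` equals the infimum over models of the static KB `(μ_t, 𝕊)` of `P_p(c)`. -/
theorem timed_entailment_eq_static [Fintype V]
    (satA : I → A → Prop) (satC : I → C → Prop)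
    (μ : PMF (V → Bool)) (T : (V → Bool) → PMF (V → Bool))
    (𝕊 : Finset (A × (V → Option Bool))) (c : C) (t : ℕ) (ht : 1 ≤ t)
    (hmod : ∀ W : V → Bool, ∃ i : I, IsOntModel satA (OW 𝕊 W) i) :
    PKtime satA satC μ T 𝕊 c t
      = sInf {x : ℝ≥0∞ | ∃ q : PMF (I × (V → Bool)),
          IsKBModel satA (marg μ T (t - 1)) 𝕊 q ∧ x = Pp satC q c} := by
  have hex := exists_kbmodel satA 𝕊 hmod
  choose P hP using hex
  apply le_antisymm
  · apply le_sInf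
    rintro x ⟨q, hq, rfl⟩
    apply sInf_le
    refine ⟨fun s => if s = t then q else P (marg μ T (s - 1)), ?_, ?_⟩
    · intro s hs
      by_cases h : s = t
      · subst h; simpa using hq
      · simpa [h] using hP (marg μ T (s - 1))
    · simp
  · apply sInf_le_sInf
    rintro x ⟨p, hp, rfl⟩
    exact ⟨p t, hp t ht, rfl⟩

end BL
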